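/- Let w₁, w₂, z be words over {a,b} and suppose w₂ = w₁·u₂ for some word u₂ (i.e. w₁ is a prefix of w₂). Then m(w̄₁·a·z·b·w₂) < m(w̄₁·b·z̄·a·w₂), where w̄ denotes word reversal and m is the top-right entry of the matrix product under M(a)=[[1,1],[1,2]], M(b)=[[2,1],[1,1]]. -/

import Mathlib

def A : Matrix (Fin 2) (Fin 2) ℤ := !![1,1;1,2]
def B : Matrix (Fin 2) (Fin 2) ℤ := !![2,1;1,1]
/-- matrix of a word: `false` is the letter `a`, `true` is the letter `b` -/
def Mw (w : List Bool) : Matrix (Fin 2) (Fin 2) ℤ :=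
  (w.map (fun x => if x then B else A)).prod
/-- the m-value: the top-right entry -/
def mval (w : List Bool) : ℤ := Mw w 0 1
def U : Matrix (Fin 2) (Fin 2) ℤ := !![0,-1;1,0]
def J : Matrix (Fin 2) (Fin 2) ℤ := !![0,1;1,0]
/-- reversal with letters exchanged -/
def Ebar (w : List Bool) : List Bool := (w.map (fun x => !x)).reverse
def pell : ℕ → ℕ
  | 0 => 0
  | 1 => 1
  | n+2 => 2 * pell (n+1) + pell n

open Matrix in
lemma Mw_append (x y : List Bool) : Mw (x ++ y) = Mw x * Mw y := by
  simp [Mw, List.prod_append]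

open Matrix in
lemma Mw_reverse (w : List Bool) : Mw w.reverse = (Mw w)ᵀ := by
  induction w with
  | nil => simp [Mw]
  | cons x w ih =>
    rw [List.reverse_cons, Mw_append, ih]
    have : Mw (x :: w) = (if x then B else A) * Mw w := by simp [Mw]
    rw [this, Matrix.transpose_mul]
    congr 1
    cases x <;> simp [Mw, A, B] <;> decide

lemma Mw_pos (w : List Bool) : (∀ i j, 0 ≤ Mw w i j) ∧ 1 ≤ Mw w 0 0 ∧ 1 ≤ Mw w 1 1 := by
  induction w with
  | nil =>
    refine ⟨fun i j => ?_, by simp [Mw], by simp [Mw]⟩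
    fin_cases i <;> fin_cases j <;> simp [Mw, Matrix.one_apply]
  | cons x w ih =>
    obtain ⟨h1, h2, h3⟩ := ih
    have hm : Mw (x :: w) = (if x then B else A) * Mw w := by simp [Mw]
    cases x <;> simp only [Bool.false_eq_true, if_true, if_false] at hm <;>
      refine ⟨fun i j => ?_, ?_, ?_⟩ <;>
      [skip; skip; skip; skip; skip; skip] <;>
      first
      | (fin_cases i <;> fin_cases j <;>
          simp [hm, Matrix.mul_apply, Fin.sum_univ_two, A, B] <;>
          nlinarith [h1 0 0, h1 0 1, h1 1 0, h1 1 1, h2, h3])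
      | (simp [hm, Matrix.mul_apply, Fin.sum_univ_two, A, B] <;>
          nlinarith [h1 0 0, h1 0 1, h1 1 0, h1 1 1, h2, h3])

lemma Mw_det (w : List Bool) : (Mw w).det = 1 := by
  induction w with
  | nil => simp [Mw]
  | cons x w ih =>
    have hm : Mw (x :: w) = (if x then B else A) * Mw w := by simp [Mw]
    rw [hm, Matrix.det_mul, ih]
    cases x <;> simp [A, B, Matrix.det_fin_two_of]

open Matrix in
lemma key (P M R : Matrix (Fin 2) (Fin 2) ℤ) :
    (Pᵀ * B * Mᵀ * A * P * R) 0 1 - (Pᵀ * A * M * B * P * R) 0 1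
      = (M 0 0 + 3 * M 1 0 + M 1 1) * R 1 1 * P.det := by
  simp [Matrix.mul_apply, Fin.sum_univ_two, Matrix.det_fin_two, A, B,
    Matrix.transpose_apply]
  ring

open Matrix in
theorem stmt10 (w₁ w₂ z : List Bool) (h : w₁ <+: w₂) :
    mval (w₁.reverse ++ [false] ++ z ++ [true] ++ w₂) <
    mval (w₁.reverse ++ [true] ++ z.reverse ++ [false] ++ w₂) := by
  obtain ⟨u, rfl⟩ := h
  have hA : Mw [false] = A := by simp [Mw]
  have hB : Mw [true] = B := by simp [Mw]
  rw [← sub_pos]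
  have e1 : mval (w₁.reverse ++ [true] ++ z.reverse ++ [false] ++ (w₁ ++ u))
      = ((Mw w₁)ᵀ * B * (Mw z)ᵀ * A * Mw w₁ * Mw u) 0 1 := by
    simp only [mval, Mw_append, hA, hB, Mw_reverse, Matrix.mul_assoc]
  have e2 : mval (w₁.reverse ++ [false] ++ z ++ [true] ++ (w₁ ++ u))
      = ((Mw w₁)ᵀ * A * Mw z * B * Mw w₁ * Mw u) 0 1 := by
    simp only [mval, Mw_append, hA, hB, Mw_reverse, Matrix.mul_assoc]
  rw [e1, e2, key, Mw_det]
  obtain ⟨hz1, hz2, hz3⟩ := Mw_pos z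
  obtain ⟨_, _, hu⟩ := Mw_pos u
  nlinarith [hz1 1 0]
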